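/- Let φ(u) = 1 + (αu - u²)/g_α(u) with g_α(u) = u² - αu - αu e^{u-α} + α² e^{2(u-α)}, and define ψ(u) = u + β - βφ(u). If 0 < β < α e^{-2α}, then ψ'(0) = 1 - β e^{2α}/α > 0, and there exists u* ∈ (0, u₀) such that ψ(u) > 0 for all u ∈ (0, u*], where u₀ is the smallest positive zero of g_α. -/

import Mathlib

open Real

/-- with `φ(u) = 1 + (αu - u²)/g_α(u)` and `ψ(u) = u + β - βφ(u)`,
if `0 < β < α e^{-2α}` then `ψ'(0) = 1 - β e^{2α}/α > 0` and there exists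
`u* ∈ (0, u₀)` with `ψ(u) > 0` for all `u ∈ (0, u*]`, where `u₀` is the smallest
positive zero of `g_α`. -/
theorem exponent_positive (α β : ℝ) (hα : 0 < α) (hβ : 0 < β)
    (hβα : β < α * exp (-2 * α))
    (g φ ψ : ℝ → ℝ)
    (hg : ∀ u, g u = u ^ 2 - α * u - α * u * exp (u - α) + α ^ 2 * exp (2 * (u - α)))
    (hφ : ∀ u, φ u = 1 + (α * u - u ^ 2) / g u)
    (hψ : ∀ u, ψ u = u + β - β * φ u)
    (u₀ : ℝ) (hu₀pos : 0 < u₀) (hu₀zero : g u₀ = 0)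
    (hu₀min : ∀ u : ℝ, 0 < u → u < u₀ → g u ≠ 0) :
    deriv ψ 0 = 1 - β * exp (2 * α) / α ∧ 0 < 1 - β * exp (2 * α) / α ∧
      ∃ ustar : ℝ, 0 < ustar ∧ ustar < u₀ ∧
        ∀ u : ℝ, 0 < u → u ≤ ustar → 0 < ψ u := by
  have hg0 : g 0 = α ^ 2 * exp (-2 * α) := by
    rw [hg]; ring_nf
  have hg0pos : 0 < g 0 := by
    rw [hg0]; positivity
  have hg0ne : g 0 ≠ 0 := ne_of_gt hg0pos
  have he : HasDerivAt (fun u : ℝ => exp (u - α)) (exp (0 - α)) 0 := by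
    simpa [Function.comp_def] using (Real.hasDerivAt_exp (0 - α)).comp 0 ((hasDerivAt_id 0).sub_const α)
  have he2 : HasDerivAt (fun u : ℝ => exp (2 * (u - α))) (2 * exp (2 * (0 - α))) 0 := by
    have h2 : HasDerivAt (fun u : ℝ => 2 * (u - α)) 2 0 := by
      simpa using ((hasDerivAt_id 0).sub_const α).const_mul 2
    simpa [mul_comm, Function.comp_def] using (Real.hasDerivAt_exp (2 * (0 - α))).comp 0 h2
  have hgd : HasDerivAt g
      ((2 : ℕ) * (0:ℝ) ^ 1 - α * 1 - (α * 1 * exp (0 - α) + α * 0 * exp (0 - α))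
        + α ^ 2 * (2 * exp (2 * (0 - α)))) 0 := by
    have : HasDerivAt (fun u : ℝ => u ^ 2 - α * u - α * u * exp (u - α)
        + α ^ 2 * exp (2 * (u - α)))
        ((2 : ℕ) * (0:ℝ) ^ 1 - α * 1 - (α * 1 * exp (0 - α) + α * 0 * exp (0 - α))
        + α ^ 2 * (2 * exp (2 * (0 - α)))) 0 :=
      (((hasDerivAt_pow 2 0).sub ((hasDerivAt_id 0).const_mul α)).sub
        ((((hasDerivAt_id 0).const_mul α)).mul he)).add (he2.const_mul (α ^ 2))
    exact this.congr_of_eventuallyEq (Filter.Eventually.of_forall fun u => (hg u))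
  have hN : HasDerivAt (fun u : ℝ => α * u - u ^ 2) α 0 := by
    simpa [Pi.sub_def] using ((hasDerivAt_id 0).const_mul α).sub (hasDerivAt_pow 2 0)
  have hdiv := hN.div hgd hg0ne
  have hdiv' : HasDerivAt (fun y : ℝ => (α * y - y ^ 2) / g y) (α / g 0) 0 := by
    have hdiv2 : HasDerivAt (fun y : ℝ => (α * y - y ^ 2) / g y) _ 0 := hdiv
    convert hdiv2 using 1
    field_simp
    ring
  have hψfun : ψ = fun u => u + β - β * (1 + (α * u - u ^ 2) / g u) := by
    funext u; rw [hψ, hφ]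
  have hψd : HasDerivAt ψ (1 - β * (α / g 0)) 0 := by
    rw [hψfun]
    simpa [Pi.sub_def] using ((hasDerivAt_id 0).add_const β).sub
      (((hasDerivAt_const (0:ℝ) (1:ℝ)).add hdiv').const_mul β)
  have hval : 1 - β * (α / g 0) = 1 - β * exp (2 * α) / α := by
    rw [hg0, show (-2 * α : ℝ) = -(2 * α) by ring, Real.exp_neg]
    field_simp
  rw [hval] at hψd
  have hβe : β * exp (2 * α) < α := by
    have h := mul_lt_mul_of_pos_right hβα (exp_pos (2 * α))
    rwa [mul_assoc, ← Real.exp_add, show (-2 * α + 2 * α : ℝ) = 0 by ring,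
      Real.exp_zero, mul_one] at h
  have hdpos : 0 < 1 - β * exp (2 * α) / α := by
    have : β * exp (2 * α) / α < 1 := (div_lt_one hα).mpr hβe
    linarith
  refine ⟨hψd.deriv, hdpos, ?_⟩
  -- ψ 0 = 0
  have hψ0 : ψ 0 = 0 := by
    rw [hψ, hφ]; simp
  have hslope := hasDerivAt_iff_tendsto_slope.mp hψd
  have hev : ∀ᶠ u in nhdsWithin 0 {(0:ℝ)}ᶜ, 0 < slope ψ 0 u :=
    hslope.eventually (eventually_gt_nhds hdpos)
  rw [eventually_nhdsWithin_iff] at hev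
  rw [Metric.eventually_nhds_iff] at hev
  obtain ⟨ε, hε, hball⟩ := hev
  refine ⟨min (ε / 2) (u₀ / 2), by positivity, ?_, ?_⟩
  · exact lt_of_le_of_lt (min_le_right _ _) (by linarith)
  · intro u hu hule
    have huε : |u - 0| < ε := by
      rw [sub_zero, abs_of_pos hu]
      have := le_trans hule (min_le_left _ _)
      linarith
    have hsl := hball huε (by simp [ne_of_gt hu])
    rw [slope_def_field] at hsl
    have : 0 < (ψ u - ψ 0) / (u - 0) := hsl
    rw [hψ0, sub_zero, sub_zero] at this
    have := mul_pos this hu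
    rwa [div_mul_cancel₀ _ (ne_of_gt hu)] at this
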